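/- Let 1 ≥ p_1 ≥ ... ≥ p_D ≥ 0 with p_{d+1} < 1, 1 < d < D, and ζ ≥ 0 with p_d + ζ ≤ 1. Then the difference ΔE between the concentrated and original expected lengths satisfies ΔE ≥ A·[1 − (p_d − p_{d+1} + ζ)·(1 − p_{d+1}^{D−d})/(1 − p_{d+1})], where A = ζ·Π_{i=1}^{d−1} p_i, and this lower bound is nonnegative. -/

import Mathlib

open Finset

/-- Lower bound for the difference `ΔE` between the concentrated and original expected
lengths: `ΔE ≥ A·[1 − (p_d − p_{d+1} + ζ)·(1 − p_{d+1}^{D−d})/(1 − p_{d+1})]` with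
`A = ζ·∏_{i=1}^{d−1} p i`, and this lower bound is nonnegative. -/
theorem stmt3 (D d : ℕ) (hd : 1 < d) (hdD : d < D) (p : ℕ → ℝ) (ζ : ℝ)
    (hp1 : p 1 ≤ 1) (hpD : 0 ≤ p D)
    (hmono : ∀ i, 1 ≤ i → i < D → p (i + 1) ≤ p i)
    (hpd1 : p (d + 1) < 1)
    (hζ : 0 ≤ ζ) (hζd : p d + ζ ≤ 1) :
    (ζ * ∏ i ∈ Finset.Icc 1 (d - 1), p i) *
        (1 - (p d - p (d + 1) + ζ) * ((1 - p (d + 1) ^ (D - d)) / (1 - p (d + 1))))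
      ≤ (∑ k ∈ Finset.Icc 1 D, ∏ i ∈ Finset.Icc 1 k,
          (if i = d then p d + ζ else if i = d + 1 then p (d + 1) - ζ else p i))
        - ∑ k ∈ Finset.Icc 1 D, ∏ i ∈ Finset.Icc 1 k, p i
    ∧ 0 ≤ (ζ * ∏ i ∈ Finset.Icc 1 (d - 1), p i) *
        (1 - (p d - p (d + 1) + ζ) * ((1 - p (d + 1) ^ (D - d)) / (1 - p (d + 1)))) := by
  set q : ℕ → ℝ := fun i => if i = d then p d + ζ else if i = d + 1 then p (d + 1) - ζ else p i
    with hqdef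
  have hmono' : ∀ i j, 1 ≤ i → i ≤ j → j ≤ D → p j ≤ p i := by
    intro i j hi hij hjD
    induction j with
    | zero => omega
    | succ n ih =>
      rcases Nat.lt_or_ge i (n + 1) with h | h
      · exact le_trans (hmono n (by omega) (by omega)) (ih (by omega) (by omega))
      · have : i = n + 1 := by omega
        subst this; exact le_rfl
  have hnn : ∀ i, 1 ≤ i → i ≤ D → 0 ≤ p i := fun i h1 h2 =>
    le_trans hpD (hmono' i D h1 h2 le_rfl)
  set x := p (d + 1) with hxdef
  have hx0 : 0 ≤ x := hnn (d + 1) (by omega) (by omega)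
  have hx1 : x < 1 := hpd1
  set A0 : ℝ := ∏ i ∈ Finset.Icc 1 (d - 1), p i with hA0def
  have hA0 : 0 ≤ A0 := Finset.prod_nonneg fun i hi => by
    rw [Finset.mem_Icc] at hi; exact hnn i hi.1 (by omega)
  set c : ℝ := p d - x + ζ with hcdef
  have hc0 : 0 ≤ c := by
    have := hmono d (by omega) hdD
    rw [hcdef]; linarith
  have hc1 : c ≤ 1 - x := by rw [hcdef]; linarith
  set S : ℝ := (1 - x ^ (D - d)) / (1 - x) with hSdef
  set T : ℝ := ∑ k ∈ Finset.Icc (d + 1) D, ∏ i ∈ Finset.Icc (d + 2) k, p i with hTdef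
  -- products over Icc 1 k for the three ranges
  have hk1 : ∀ k, k ≤ d - 1 → ∏ i ∈ Finset.Icc 1 k, q i = ∏ i ∈ Finset.Icc 1 k, p i := by
    intro k hk
    refine Finset.prod_congr rfl fun i hi => ?_
    rw [Finset.mem_Icc] at hi
    have h1 : i ≠ d := by omega
    have h2 : i ≠ d + 1 := by omega
    simp [hqdef, h1, h2]
  have hkd_q : ∏ i ∈ Finset.Icc 1 d, q i = A0 * (p d + ζ) := by
    have : d = (d - 1) + 1 := by omega
    rw [this, Finset.prod_Icc_succ_top (by omega), hk1 (d - 1) le_rfl]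
    have h1 : (d - 1 + 1) = d := by omega
    simp [hqdef, h1, hA0def]
  have hkd_p : ∏ i ∈ Finset.Icc 1 d, p i = A0 * p d := by
    have : d = (d - 1) + 1 := by omega
    rw [this, Finset.prod_Icc_succ_top (by omega)]
  have hkd1_q : ∏ i ∈ Finset.Icc 1 (d + 1), q i = A0 * (p d + ζ) * (x - ζ) := by
    rw [Finset.prod_Icc_succ_top (by omega), hkd_q]
    simp [hqdef]
  have hkd1_p : ∏ i ∈ Finset.Icc 1 (d + 1), p i = A0 * p d * x := by
    rw [Finset.prod_Icc_succ_top (by omega), hkd_p]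
  have hsplit : ∀ (f : ℕ → ℝ) k, d + 1 ≤ k →
      ∏ i ∈ Finset.Icc 1 k, f i
        = (∏ i ∈ Finset.Icc 1 (d + 1), f i) * ∏ i ∈ Finset.Icc (d + 2) k, f i := by
    intro f k hk
    have h0 : Finset.Icc 1 (d+1) = Finset.Ioc 0 (d+1) := Finset.Icc_add_one_left_eq_Ioc 0 (d+1)
    have h1 : Finset.Icc 1 k = Finset.Ioc 0 k := Finset.Icc_add_one_left_eq_Ioc 0 k
    have h2 : Finset.Icc (d+2) k = Finset.Ioc (d+1) k := Finset.Icc_add_one_left_eq_Ioc (d+1) k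
    rw [h0, h1, h2, Finset.prod_Ioc_consecutive f (by omega) hk]
  have hqtail : ∀ k, ∏ i ∈ Finset.Icc (d + 2) k, q i = ∏ i ∈ Finset.Icc (d + 2) k, p i := by
    intro k
    refine Finset.prod_congr rfl fun i hi => ?_
    rw [Finset.mem_Icc] at hi
    have h1 : i ≠ d := by omega
    have h2 : i ≠ d + 1 := by omega
    simp [hqdef, h1, h2]
  -- the key identity: ΔE = ζ * A0 * (1 - c * T)
  have hkey : (∑ k ∈ Finset.Icc 1 D, ∏ i ∈ Finset.Icc 1 k, q i)
      - ∑ k ∈ Finset.Icc 1 D, ∏ i ∈ Finset.Icc 1 k, p i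
      = ζ * A0 * (1 - c * T) := by
    rw [← Finset.sum_sub_distrib]
    have hsplitsum : ∀ (g : ℕ → ℝ),
        ∑ k ∈ Finset.Icc 1 D, g k = (∑ k ∈ Finset.Icc 1 (d-1), g k) + g d
          + ∑ k ∈ Finset.Icc (d+1) D, g k := by
      intro g
      have h1 : Finset.Icc 1 D = Finset.Ioc 0 D := Finset.Icc_add_one_left_eq_Ioc 0 D
      have h2 : Finset.Icc 1 (d-1) = Finset.Ioc 0 (d-1) := Finset.Icc_add_one_left_eq_Ioc 0 (d-1)
      have h3 : Finset.Icc (d+1) D = Finset.Ioc d D := Finset.Icc_add_one_left_eq_Ioc d D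
      rw [h1, h2, h3, ← Finset.sum_Ioc_consecutive g (show 0 ≤ d by omega) (le_of_lt hdD),
        ← Finset.sum_Ioc_consecutive g (show 0 ≤ d - 1 by omega) (show d - 1 ≤ d by omega)]
      have h4 : Finset.Ioc (d-1) d = {d} := by
        have h := Nat.Ioc_succ_singleton (b := d - 1)
        rwa [show d - 1 + 1 = d by omega] at h
      rw [h4, Finset.sum_singleton]
    rw [hsplitsum]
    have e1 : ∑ k ∈ Finset.Icc 1 (d-1),
        ((∏ i ∈ Finset.Icc 1 k, q i) - ∏ i ∈ Finset.Icc 1 k, p i) = 0 := by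
      refine Finset.sum_eq_zero fun k hk => ?_
      rw [Finset.mem_Icc] at hk
      rw [hk1 k hk.2, sub_self]
    have e2 : (∏ i ∈ Finset.Icc 1 d, q i) - ∏ i ∈ Finset.Icc 1 d, p i = ζ * A0 := by
      rw [hkd_q, hkd_p]; ring
    have e3 : ∑ k ∈ Finset.Icc (d+1) D,
        ((∏ i ∈ Finset.Icc 1 k, q i) - ∏ i ∈ Finset.Icc 1 k, p i)
        = -(ζ * A0 * c) * T := by
      rw [hTdef, Finset.mul_sum]
      refine Finset.sum_congr rfl fun k hk => ?_
      rw [Finset.mem_Icc] at hk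
      rw [hsplit q k hk.1, hsplit p k hk.1, hqtail, hkd1_q, hkd1_p, hcdef]
      ring
    rw [e1, e2, e3]; ring
  rw [hkey]
  -- S is nonnegative and T ≤ S
  have hxn : x ^ (D - d) ≤ 1 := pow_le_one₀ hx0 (le_of_lt hx1)
  have hS0 : 0 ≤ S := div_nonneg (by linarith) (by linarith)
  have hTS : T ≤ S := by
    have step1 : T ≤ ∑ k ∈ Finset.Icc (d+1) D, x ^ (k - (d+1)) := by
      rw [hTdef]
      refine Finset.sum_le_sum fun k hk => ?_
      rw [Finset.mem_Icc] at hk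
      calc ∏ i ∈ Finset.Icc (d+2) k, p i
          ≤ ∏ i ∈ Finset.Icc (d+2) k, x := by
            refine Finset.prod_le_prod (fun i hi => ?_) (fun i hi => ?_)
            · rw [Finset.mem_Icc] at hi; exact hnn i (by omega) (by omega)
            · rw [Finset.mem_Icc] at hi
              exact hmono' (d+1) i (by omega) (by omega) (by omega)
        _ = x ^ (k - (d+1)) := by
            rw [Finset.prod_const, Nat.card_Icc]
            congr 1
            omega
    have step2 : ∑ k ∈ Finset.Icc (d+1) D, x ^ (k - (d+1)) = S := by
      have h1 : Finset.Icc (d+1) D = Finset.Ico (d+1) (D+1) := by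
        rw [Finset.Ico_add_one_right_eq_Icc]
      rw [h1, Finset.sum_Ico_eq_sum_range]
      have h2 : D + 1 - (d + 1) = D - d := by omega
      have h3 : ∀ i, (d + 1 + i) - (d + 1) = i := fun i => by omega
      simp only [h2, h3]
      rw [geom_sum_eq (ne_of_lt hx1) (D - d), hSdef]
      rw [← neg_div_neg_eq]
      congr 1 <;> ring
    linarith
  have hζA0 : 0 ≤ ζ * A0 := mul_nonneg hζ hA0
  have hcS : c * S ≤ 1 := by
    have h1 : c * S ≤ (1 - x) * S := mul_le_mul_of_nonneg_right hc1 hS0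
    have hne : (1:ℝ) - x ≠ 0 := by linarith
    have h2 : (1 - x) * S = 1 - x ^ (D - d) := by
      rw [hSdef, ← mul_div_assoc, mul_comm, mul_div_assoc, div_self hne, mul_one]
    calc c * S ≤ (1 - x) * S := h1
      _ = 1 - x ^ (D - d) := h2
      _ ≤ 1 := by linarith [pow_nonneg hx0 (D - d)]
  constructor
  · have hcTS : c * T ≤ c * S := mul_le_mul_of_nonneg_left hTS hc0
    have : ζ * A0 * (1 - c * S) ≤ ζ * A0 * (1 - c * T) :=
      mul_le_mul_of_nonneg_left (by linarith) hζA0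
    calc (ζ * A0) * (1 - c * ((1 - x ^ (D - d)) / (1 - x)))
        = ζ * A0 * (1 - c * S) := by rw [hSdef]
      _ ≤ ζ * A0 * (1 - c * T) := this
  · have : (0:ℝ) ≤ ζ * A0 * (1 - c * S) := mul_nonneg hζA0 (by linarith)
    calc (0:ℝ) ≤ ζ * A0 * (1 - c * S) := this
      _ = (ζ * A0) * (1 - c * ((1 - x ^ (D - d)) / (1 - x))) := by rw [hSdef]
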